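/- With T₀ = [e, O_b] as above, the similarity transform of the rank-one matrix e b^T satisfies (T₀^{−1} (e b^T) T₀)_{ij} = δ_{i1}δ_{j1}; consequently, for M* = e b^T + δA, det(M* − δμ I) = δ^{s−1}( det(B − μI) + δ det(A − μI) ), where B = O_b^T Q A O_b. -/

import Mathlib

open Matrix

/-- Key determinant computation on `Unit ⊕ Fin m`: the determinant of
`E₁₁ + δ•C − (δμ)•1` equals `δ^m (det(C₂₂ − μ1) + δ det(C − μ1))`. -/
lemma det_key_aux {m : ℕ} (C : Matrix (Unit ⊕ Fin m) (Unit ⊕ Fin m) ℝ) (δ μ : ℝ) :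
    ((Matrix.of fun i j => if i = Sum.inl () ∧ j = Sum.inl () then (1 : ℝ) else 0 :
        Matrix (Unit ⊕ Fin m) (Unit ⊕ Fin m) ℝ) + δ • C - (δ * μ) • 1).det =
      δ ^ m * ((C.toBlocks₂₂ - μ • (1 : Matrix (Fin m) (Fin m) ℝ)).det +
        δ * (C - μ • 1).det) := by
  classical
  set D : Matrix (Unit ⊕ Fin m) (Unit ⊕ Fin m) ℝ := δ • (C - μ • 1) with hD
  have hN : ((Matrix.of fun i j => if i = Sum.inl () ∧ j = Sum.inl () then (1 : ℝ) else 0 :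
        Matrix (Unit ⊕ Fin m) (Unit ⊕ Fin m) ℝ) + δ • C - (δ * μ) • 1) =
      D.updateRow (Sum.inl ())
        ((fun j => if j = Sum.inl () then (1 : ℝ) else 0) + D (Sum.inl ())) := by
    ext i j
    rcases i with u | i
    · simp only [updateRow_apply, if_pos rfl, Pi.add_apply, hD]
      simp only [Matrix.sub_apply, Matrix.add_apply, Matrix.smul_apply, Matrix.one_apply,
        smul_eq_mul]
      rcases j with v | j <;> simp <;> ring
    · simp only [updateRow_apply, hD]
      simp only [Matrix.sub_apply, Matrix.add_apply, Matrix.smul_apply, Matrix.one_apply,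
        smul_eq_mul]
      rcases j with v | j <;> simp
      split_ifs <;> ring
  rw [hN, Matrix.det_updateRow_add, Matrix.updateRow_eq_self]
  have h1 : D.updateRow (Sum.inl ()) (fun j => if j = Sum.inl () then (1 : ℝ) else 0) =
      Matrix.fromBlocks 1 0 D.toBlocks₂₁ D.toBlocks₂₂ := by
    ext i j
    rcases i with u | i <;> rcases j with v | j <;>
      simp [updateRow_apply, Matrix.fromBlocks, Matrix.toBlocks₂₁, Matrix.toBlocks₂₂,
        Matrix.one_apply]
  have h22 : D.toBlocks₂₂ = δ • (C.toBlocks₂₂ - μ • (1 : Matrix (Fin m) (Fin m) ℝ)) := by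
    ext i j
    simp [hD, Matrix.toBlocks₂₂, Matrix.one_apply, Sum.inr.injEq]
  have hdet1 : (D.updateRow (Sum.inl ()) (fun j => if j = Sum.inl () then (1 : ℝ) else 0)).det =
      δ ^ m * (C.toBlocks₂₂ - μ • (1 : Matrix (Fin m) (Fin m) ℝ)).det := by
    rw [h1, Matrix.det_fromBlocks_zero₁₂, h22, Matrix.det_smul]
    simp
  have hdetD : D.det = δ ^ (m + 1) * (C - μ • 1).det := by
    rw [hD, Matrix.det_smul]
    congr 1
    simp [Fintype.card_sum, add_comm]
  rw [hdet1, hdetD]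
  ring

/-- With `T₀ = [e, O_b]` as in the previous statement, `T₀⁻¹ (e bᵀ) T₀` has a single nonzero
entry `1` in position `(1,1)`; consequently for `M* = e bᵀ + δA`,
`det(M* − δμ I) = δ^{s−1} ( det(B − μI) + δ det(A − μI) )`, where `B = O_bᵀ Q A O_b`. -/
theorem rank_one_similarity_and_det_identity {s m : ℕ} (hm : m + 1 = s)
    (b : Fin s → ℝ) (hb : b ⬝ᵥ (fun _ => 1) = 1)
    (Ob : Matrix (Fin s) (Fin m) ℝ)
    (horth : Obᵀ * Ob = 1)
    (hcol : ∀ k : Fin m, b ⬝ᵥ (fun i => Ob i k) = 0)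
    (hspan : ∀ v : Fin s → ℝ, b ⬝ᵥ v = 0 →
      v ∈ Submodule.span ℝ (Set.range fun k : Fin m => fun i => Ob i k))
    (Q : Matrix (Fin s) (Fin s) ℝ)
    (hQ : Q = 1 - Matrix.vecMulVec (fun _ => 1) b)
    (T₀ : Matrix (Fin s) (Unit ⊕ Fin m) ℝ)
    (hT₀ : T₀ = fun i j => Sum.elim (fun _ => (1 : ℝ)) (fun k => Ob i k) j)
    (Tinv : Matrix (Unit ⊕ Fin m) (Fin s) ℝ)
    (hTinv : Tinv = fun j i => Sum.elim (fun _ => b i) (fun k => (Obᵀ * Q) k i) j)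
    (A : Matrix (Fin s) (Fin s) ℝ)
    (B : Matrix (Fin m) (Fin m) ℝ) (hB : B = Obᵀ * Q * A * Ob) :
    ((Tinv * Matrix.vecMulVec (fun _ => 1) b : Matrix (Unit ⊕ Fin m) (Fin s) ℝ) * T₀ =
      fun i j => if i = Sum.inl () ∧ j = Sum.inl () then (1 : ℝ) else 0) ∧
    (∀ δ μ : ℝ,
      (Matrix.vecMulVec (fun _ => (1 : ℝ)) b + δ • A - (δ * μ) • 1).det =
        δ ^ m * ((B - μ • 1).det + δ * (A - μ • 1).det)) := by
  classical
  have hsumb : (∑ i, b i) = 1 := by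
    simpa [dotProduct] using hb
  -- row sums of Q are zero
  have hQsum : ∀ i, (∑ l, Q i l) = 0 := by
    intro i
    simp [hQ, Matrix.sub_apply, Matrix.one_apply, Matrix.vecMulVec_apply,
      Finset.sum_sub_distrib, hsumb]
  -- Q * Ob = Ob
  have hQOb : Q * Ob = Ob := by
    have h2 : Matrix.vecMulVec (fun _ : Fin s => (1 : ℝ)) b * Ob = (0 : Matrix (Fin s) (Fin m) ℝ) := by
      ext i k
      have h := hcol k
      simp only [dotProduct] at h
      simp [Matrix.mul_apply, Matrix.vecMulVec_apply, h]
    rw [hQ, Matrix.sub_mul, Matrix.one_mul, h2, sub_zero]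
  -- row sums of Obᵀ * Q are zero
  have hOQsum : ∀ i : Fin m, (∑ k, (Obᵀ * Q) i k) = 0 := by
    intro i
    have h : ∀ l, (∑ k, Ob l i * Q l k) = 0 := by
      intro l
      rw [← Finset.mul_sum, hQsum, mul_zero]
    simp only [Matrix.mul_apply, Matrix.transpose_apply]
    rw [Finset.sum_comm]
    exact Finset.sum_eq_zero fun l _ => h l
  have hOQO : Obᵀ * Q * Ob = 1 := by rw [Matrix.mul_assoc, hQOb, horth]
  -- Tinv * T₀ = 1
  have hTT : Tinv * T₀ = 1 := by
    ext i j
    rcases i with u | i <;> rcases j with v | j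
    · rw [Matrix.mul_apply]
      simp [hTinv, hT₀, Matrix.mul_apply, Matrix.one_apply, hsumb]
    · have h := hcol j
      simp only [dotProduct] at h
      rw [Matrix.mul_apply]
      simp [hTinv, hT₀, Matrix.mul_apply, Matrix.one_apply, h]
    · have h := hOQsum i
      simp only [Matrix.mul_apply, Matrix.transpose_apply] at h
      rw [Matrix.mul_apply]
      simp [hTinv, hT₀, Matrix.mul_apply, Matrix.one_apply, h]
    · have h := congrFun (congrFun hOQO i) j
      simp only [Matrix.mul_apply, Matrix.one_apply, Sum.inr.injEq] at h ⊢
      simp only [hTinv, hT₀, Sum.elim_inr, Sum.inr.injEq]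
      simpa [Matrix.mul_apply] using h
  -- an equivalence for reindexing
  have hcard : Fintype.card (Fin s) = Fintype.card (Unit ⊕ Fin m) := by
    simp [← hm, add_comm]
  let eqv : Fin s ≃ (Unit ⊕ Fin m) := Fintype.equivOfCardEq hcard
  -- similarity preserves determinants
  have hdet : ∀ M : Matrix (Fin s) (Fin s) ℝ, (Tinv * M * T₀).det = M.det := by
    intro M
    have key : Tinv * M * T₀ =
        (Tinv.submatrix id eqv.symm) * (M.submatrix eqv.symm eqv.symm) *
          (T₀.submatrix eqv.symm id) := by
      rw [Matrix.submatrix_mul_equiv, Matrix.submatrix_mul_equiv]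
      rfl
    have key2 : (Tinv.submatrix id eqv.symm) * (T₀.submatrix eqv.symm id) = 1 := by
      rw [Matrix.submatrix_mul_equiv]
      simp [hTT]
    have hprod : (Tinv.submatrix id eqv.symm).det * (T₀.submatrix eqv.symm id).det = 1 := by
      rw [← Matrix.det_mul, key2, Matrix.det_one]
    calc (Tinv * M * T₀).det
        = (Tinv.submatrix id eqv.symm).det * (M.submatrix eqv.symm eqv.symm).det *
            (T₀.submatrix eqv.symm id).det := by rw [key, Matrix.det_mul, Matrix.det_mul]
      _ = (M.submatrix eqv.symm eqv.symm).det *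
            ((Tinv.submatrix id eqv.symm).det * (T₀.submatrix eqv.symm id).det) := by ring
      _ = M.det := by rw [hprod, mul_one, Matrix.det_submatrix_equiv_self]
  -- Part 1
  have hE : Tinv * (Matrix.vecMulVec (fun _ => 1) b : Matrix (Fin s) (Fin s) ℝ) * T₀ =
      fun i j => if i = Sum.inl () ∧ j = Sum.inl () then (1 : ℝ) else 0 := by
    have hrow : ∀ j, (∑ l, b l * T₀ l j) = if j = Sum.inl () then (1 : ℝ) else 0 := by
      intro j
      rcases j with v | k
      · simp [hT₀, hsumb]
      · have h := hcol k
        simp only [dotProduct] at h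
        simp [hT₀, h]
    have hcolT : ∀ i, (∑ k, Tinv i k) = if i = Sum.inl () then (1 : ℝ) else 0 := by
      intro i
      rcases i with u | k
      · simp [hTinv, hsumb]
      · simp [hTinv, hOQsum k]
    rw [Matrix.mul_assoc]
    ext i j
    rw [Matrix.mul_apply]
    have hinner : ∀ k, (Matrix.vecMulVec (fun _ : Fin s => (1 : ℝ)) b * T₀) k j =
        ∑ l, b l * T₀ l j := by
      intro k
      rw [Matrix.mul_apply]
      simp [Matrix.vecMulVec_apply]
    calc (∑ k, Tinv i k * (Matrix.vecMulVec (fun _ : Fin s => (1:ℝ)) b * T₀) k j)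
        = (∑ k, Tinv i k) * (∑ l, b l * T₀ l j) := by
          rw [Finset.sum_mul]
          exact Finset.sum_congr rfl fun k _ => by rw [hinner k]
      _ = (if i = Sum.inl () ∧ j = Sum.inl () then (1 : ℝ) else 0) := by
          rw [hrow, hcolT]
          by_cases hi : i = Sum.inl () <;> by_cases hj : j = Sum.inl () <;>
            simp [hi, hj]
  refine ⟨hE, ?_⟩
  -- Part 2
  intro δ μ
  set C : Matrix (Unit ⊕ Fin m) (Unit ⊕ Fin m) ℝ := Tinv * A * T₀ with hC
  have hCB : C.toBlocks₂₂ = B := by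
    ext i j
    simp only [Matrix.toBlocks₂₂, hC, hB, Matrix.of_apply, Matrix.mul_apply, hTinv, hT₀]
    rfl
  have hconj : Tinv * (Matrix.vecMulVec (fun _ => (1 : ℝ)) b + δ • A - (δ * μ) • 1) * T₀ =
      (Matrix.of fun i j => if i = Sum.inl () ∧ j = Sum.inl () then (1 : ℝ) else 0 :
        Matrix (Unit ⊕ Fin m) (Unit ⊕ Fin m) ℝ) + δ • C - (δ * μ) • 1 := by
    rw [Matrix.mul_sub, Matrix.mul_add, Matrix.sub_mul, Matrix.add_mul]
    rw [Matrix.mul_smul, Matrix.smul_mul, Matrix.mul_smul, Matrix.smul_mul, Matrix.mul_one,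
      hTT, hE, hC]
    rfl
  have hsim : C - μ • 1 = Tinv * (A - μ • 1) * T₀ := by
    rw [Matrix.mul_sub, Matrix.sub_mul, Matrix.mul_smul, Matrix.smul_mul, Matrix.mul_one,
      hTT, hC]
  calc (Matrix.vecMulVec (fun _ => (1 : ℝ)) b + δ • A - (δ * μ) • 1).det
      = (Tinv * (Matrix.vecMulVec (fun _ => (1 : ℝ)) b + δ • A - (δ * μ) • 1) * T₀).det := by
        rw [hdet]
    _ = ((Matrix.of fun i j => if i = Sum.inl () ∧ j = Sum.inl () then (1 : ℝ) else 0 :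
          Matrix (Unit ⊕ Fin m) (Unit ⊕ Fin m) ℝ) + δ • C - (δ * μ) • 1).det := by rw [hconj]
    _ = δ ^ m * ((C.toBlocks₂₂ - μ • 1).det + δ * (C - μ • 1).det) := det_key_aux C δ μ
    _ = δ ^ m * ((B - μ • 1).det + δ * (A - μ • 1).det) := by
        rw [hCB, hsim, hdet]
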